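/- arXiv:1703.09737 — 4 statements merged into one kernel-verified Lean document; each statement's English description precedes it below -/
import Mathlib

section
/- If in the sorted (nondecreasing) sequence of endpoint levels of a (kn,n)-Dyck path, position i is a west endpoint (of an east step) with level mn and position i+1 is a south endpoint (of a north step), then position i+1 also has level mn. -/
/-- Steps of a path: `true` = north step, `false` = east step.
The level of the lattice point reached after the steps `p`:
each north step adds `k*n`, each east step subtracts `n`. -/
def level (k n : ℕ) (p : List Bool) : ℤ :=
  (k * n : ℤ) * p.count true - (n : ℤ) * p.count false

/-- A `(kn,n)`-Dyck path: `n` north steps, `k*n` east steps, all prefix levels nonnegative. -/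
def IsDyck (k n : ℕ) (p : List Bool) : Prop :=
  p.count true = n ∧ p.count false = k * n ∧ ∀ i ≤ p.length, 0 ≤ level k n (p.take i)

/-- The sweep map: label each step by the level of its starting endpoint
(south endpoint for north steps, west endpoint for east steps), sweep the path
from right to left, and stably sort the labeled steps in nondecreasing order of level.
Entries are pairs `(τᵢ, σᵢ)` with `σᵢ = true` meaning `S` and `σᵢ = false` meaning `W`. -/
def sweep (k n : ℕ) (p : List Bool) : List (ℤ × Bool) :=
  ((List.range p.length).reverse.map fun i => (level k n (p.take i), p.getD i true)).mergeSort
    fun a b => decide (a.1 ≤ b.1)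

/-- The S/W word output by the sweep map. -/
def sweepWord (k n : ℕ) (p : List Bool) : List Bool :=
  (sweep k n p).map Prod.snd

private lemma lvl_dvd (k n : ℕ) (q : List Bool) : ∃ c : ℤ, level k n q = (n : ℤ) * c :=
  ⟨(k : ℤ) * q.count true - q.count false, by unfold level; push_cast; ring⟩

private lemma lvl_succ (k n : ℕ) (p : List Bool) (j : ℕ) (hj : j < p.length) :
    level k n (p.take (j + 1)) =
      level k n (p.take j) + (if p[j]'hj then ((k : ℤ) * n) else -(n : ℤ)) := by
  rw [← List.take_concat_get' p j hj]
  unfold level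
  rcases Bool.eq_false_or_eq_true (p[j]'hj) with hb | hb <;>
    rw [hb] <;> simp [List.count_append] <;> push_cast <;> ring

/-- Theorem 2.1 (first part): in the sorted sweep-map output of a `(kn,n)`-Dyck path,
if position `i` is a `W` with level `m·n` and position `i+1` is an `S`,
then position `i+1` also has level `m·n`. -/
theorem stmt3 (k n : ℕ) (hn : 0 < n) (p : List Bool) (hp : IsDyck k n p)
    (m : ℤ) (i : ℕ) (hi : i + 1 < (sweep k n p).length)
    (hW : (sweep k n p).getD i (0, true) = (m * n, false))
    (hS : ((sweep k n p).getD (i + 1) (0, true)).2 = true) :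
    ((sweep k n p).getD (i + 1) (0, true)).1 = m * n := by
  classical
  obtain ⟨hct, hcf, hnn⟩ := hp
  set f : ℕ → ℤ × Bool := fun j => (level k n (p.take j), p.getD j true) with hf
  set orig : List (ℤ × Bool) := (List.range p.length).reverse.map f with horig
  set sw := sweep k n p with hsw
  have hsweq : sw = orig.mergeSort (fun a b => decide (a.1 ≤ b.1)) := by
    rw [hsw, horig, hf]; rfl
  have trans : ∀ (a b c : ℤ × Bool),
      decide (a.1 ≤ b.1) = true → decide (b.1 ≤ c.1) = true → decide (a.1 ≤ c.1) = true := by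
    intro a b c h1 h2
    simp only [decide_eq_true_eq] at *
    exact le_trans h1 h2
  have total : ∀ (a b : ℤ × Bool), (decide (a.1 ≤ b.1) || decide (b.1 ≤ a.1)) = true := by
    intro a b
    simpa using le_total a.1 b.1
  have perm : sw.Perm orig := by rw [hsweq]; exact List.mergeSort_perm orig _
  have sorted : ∀ (q1 q2 : ℕ) (h1 : q1 < sw.length) (h2 : q2 < sw.length),
      q1 < q2 → sw[q1].1 ≤ sw[q2].1 := by
    have hs : sw.Pairwise (fun a b : ℤ × Bool => a.1 ≤ b.1) := by
      rw [hsweq]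
      exact (List.pairwise_mergeSort trans total orig).imp (fun h => of_decide_eq_true h)
    rw [List.pairwise_iff_getElem] at hs
    exact hs
  have hi1 : i + 1 < sw.length := hi
  have hi0 : i < sw.length := by omega
  have hmem : ∀ e ∈ sw, ∃ j, j < p.length ∧ f j = e := by
    intro e he
    have h2 := perm.mem_iff.mp he
    rw [horig, List.mem_map] at h2
    obtain ⟨j, hj, hje⟩ := h2
    rw [List.mem_reverse, List.mem_range] at hj
    exact ⟨j, hj, hje⟩
  have hWi : sw[i] = (m * n, false) := by
    rw [← List.getD_eq_getElem sw (0, true) hi0]; exact hW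
  set w : ℤ := (sw.getD (i + 1) (0, true)).1 with hwdef
  have hSi : sw[i + 1] = (w, true) := by
    rw [← List.getD_eq_getElem sw (0, true) hi1, hwdef]
    exact Prod.ext_iff.mpr ⟨rfl, hS⟩
  have hmnw : m * n ≤ w := by
    have h := sorted i (i + 1) hi0 hi1 (by omega)
    rw [hWi, hSi] at h
    exact h
  by_contra hne
  have hlt : m * n < w := lt_of_le_of_ne hmnw (Ne.symm hne)
  have hWmem : ((m : ℤ) * n, false) ∈ sw := by rw [← hWi]; exact List.getElem_mem hi0
  have hSmem : (w, true) ∈ sw := by rw [← hSi]; exact List.getElem_mem hi1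
  have hk : 0 < k := by
    rcases Nat.eq_zero_or_pos k with h0 | h
    · exfalso
      obtain ⟨j, hj, hfj⟩ := hmem _ hWmem
      have h2 : p.getD j true = false := by
        have := congrArg Prod.snd hfj
        simpa [hf] using this
      have h3 : false ∈ p := by
        rw [List.getD_eq_getElem p true hj] at h2
        exact h2 ▸ List.getElem_mem hj
      have h4 : false ∉ p := List.count_eq_zero.mp (by rw [hcf, h0, Nat.zero_mul])
      exact h4 h3
    · exact h
  have hmn0 : (0 : ℤ) ≤ m * n := by
    obtain ⟨j, hj, hfj⟩ := hmem _ hWmem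
    have h1 : level k n (p.take j) = m * n := by
      have := congrArg Prod.fst hfj
      simpa [hf] using this
    rw [← h1]
    exact hnn j (le_of_lt hj)
  have hw0 : (0 : ℤ) < w := lt_of_le_of_lt hmn0 hlt
  have hfin : level k n (p.take p.length) = 0 := by
    rw [List.take_length]
    unfold level
    rw [hct, hcf]
    push_cast
    ring
  -- B and its max J
  set B : Finset ℕ := (Finset.range p.length).filter (fun j => level k n (p.take j) = w) with hB
  have hBne : B.Nonempty := by
    obtain ⟨j, hj, hfj⟩ := hmem _ hSmem
    have h1 : level k n (p.take j) = w := by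
      have := congrArg Prod.fst hfj
      simpa [hf] using this
    exact ⟨j, by simp [hB, Finset.mem_filter, Finset.mem_range, hj, h1]⟩
  set J := B.max' hBne with hJdef
  have hJmem : J ∈ Finset.filter (fun j => level k n (List.take j p) = w) (Finset.range p.length) :=
    B.max'_mem hBne
  rw [Finset.mem_filter, Finset.mem_range] at hJmem
  obtain ⟨hJlt, hJlev⟩ := hJmem
  have hJmax : ∀ j, j < p.length → level k n (p.take j) = w → j ≤ J := by
    intro j h1 h2
    refine B.le_max' j ?_
    show j ∈ Finset.filter (fun j => level k n (List.take j p) = w) (Finset.range p.length)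
    rw [Finset.mem_filter, Finset.mem_range]
    exact ⟨h1, h2⟩
  -- the last step at level w is an east step
  have hpJ : p[J]'hJlt = false := by
    by_contra hcon
    rw [Bool.not_eq_false] at hcon
    have hrec := lvl_succ k n p J hJlt
    rw [if_pos hcon] at hrec
    have hjp1 : level k n (p.take (J + 1)) = w + (k : ℤ) * n := by rw [hrec, hJlev]
    have hkn : (0 : ℤ) < (k : ℤ) * n := by
      have h1 : (1 : ℤ) ≤ (k : ℤ) := by exact_mod_cast hk
      have h2 : (1 : ℤ) ≤ (n : ℤ) := by exact_mod_cast hn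
      nlinarith
    have hEx : ∃ s, J + 1 ≤ s ∧ s ≤ p.length ∧ level k n (p.take s) ≤ w :=
      ⟨p.length, by omega, le_refl _, by rw [hfin]; exact le_of_lt hw0⟩
    set s0 := Nat.find hEx with hs0def
    obtain ⟨hs1, hs2, hs3⟩ := Nat.find_spec hEx
    rw [← hs0def] at hs1 hs2 hs3
    have hmin : ∀ s, s < s0 → ¬(J + 1 ≤ s ∧ s ≤ p.length ∧ level k n (p.take s) ≤ w) :=
      fun s h => Nat.find_min hEx h
    have hs0ne : s0 ≠ J + 1 := by
      intro h
      rw [h, hjp1] at hs3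
      linarith
    have hs0gt : J + 2 ≤ s0 := by omega
    have htlen : s0 - 1 < p.length := by omega
    have hLt : w < level k n (p.take (s0 - 1)) := by
      by_contra hle
      push_neg at hle
      exact hmin (s0 - 1) (by omega) ⟨by omega, by omega, hle⟩
    have hrect := lvl_succ k n p (s0 - 1) htlen
    have ht1 : s0 - 1 + 1 = s0 := by omega
    rw [ht1] at hrect
    cases hpt' : p[s0 - 1]'htlen with
    | true =>
      rw [if_pos hpt'] at hrect
      rw [hrect] at hs3
      linarith
    | false =>
      rw [if_neg (by simp [hpt'])] at hrect
      obtain ⟨a, ha⟩ := lvl_dvd k n (p.take (s0 - 1))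
      obtain ⟨b, hb⟩ := lvl_dvd k n (p.take J)
      rw [hJlev] at hb
      have hn0 : (0 : ℤ) ≤ (n : ℤ) := by positivity
      have hab : b < a := by
        have h5 : (n : ℤ) * b < (n : ℤ) * a := by rw [← hb, ← ha]; exact hLt
        exact lt_of_mul_lt_mul_left h5 hn0
      have hge : w + (n : ℤ) ≤ level k n (p.take (s0 - 1)) := by
        rw [ha, hb]
        have h6 : (n : ℤ) * (b + 1) ≤ (n : ℤ) * a :=
          mul_le_mul_of_nonneg_left (by linarith) hn0
        linarith
      have hs0lev : level k n (p.take s0) = w := by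
        apply le_antisymm hs3
        rw [hrect]
        linarith
      have hs0len : s0 < p.length := by
        rcases lt_or_eq_of_le hs2 with h | h
        · exact h
        · exfalso
          rw [h, hfin] at hs0lev
          rw [← hs0lev] at hw0
          exact lt_irrefl _ hw0
      have := hJmax s0 hs0len hs0lev
      omega
  -- stability argument
  set prd : ℤ × Bool → Bool := fun e => decide (e.1 = w) with hprd
  set c := orig.filter prd with hcdef
  have hcpw : c.Pairwise (fun a b : ℤ × Bool => decide (a.1 ≤ b.1) = true) := by
    apply List.pairwise_of_forall_mem_list
    intro a ha b hb
    rw [hcdef, List.mem_filter] at ha hb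
    have ha2 : a.1 = w := by simpa [hprd] using ha.2
    have hb2 : b.1 = w := by simpa [hprd] using hb.2
    simp [ha2, hb2]
  have hcsub : List.Sublist c sw := by
    rw [hsweq, hcdef]
    exact List.sublist_mergeSort trans total hcpw List.filter_sublist
  have hcself : c.filter prd = c := by
    apply List.filter_eq_self.mpr
    intro a ha
    rw [hcdef, List.mem_filter] at ha
    exact ha.2
  have hcsub2 : List.Sublist c (sw.filter prd) := by
    have h2 := hcsub.filter prd
    rwa [hcself] at h2
  have hlenc : c.length = (sw.filter prd).length := by
    rw [hcdef]
    exact ((perm.filter prd).length_eq).symm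
  have hceq : c = sw.filter prd := hcsub2.eq_of_length hlenc
  -- head of sw.filter prd is (w, true)
  have htknil : (sw.take (i + 1)).filter prd = [] := by
    rw [List.filter_eq_nil_iff]
    intro e he
    rw [List.mem_take_iff_getElem] at he
    obtain ⟨q, hq, hqe⟩ := he
    have hq1 : q < i + 1 := lt_of_lt_of_le hq (min_le_left _ _)
    have hq2 : q < sw.length := lt_of_lt_of_le hq (min_le_right _ _)
    have hle : e.1 ≤ m * n := by
      rcases Nat.lt_or_ge q i with h | h
      · have h2 := sorted q i hq2 hi0 h
        rw [hWi] at h2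
        rw [← hqe]
        exact h2
      · have hqi : q = i := by omega
        subst hqi
        rw [← hqe, hWi]
    intro hpe
    have h3 : e.1 = w := by simpa [hprd] using hpe
    rw [h3] at hle
    exact absurd hle (not_le.mpr hlt)
  have hdrop : sw.drop (i + 1) = (w, true) :: sw.drop (i + 2) := by
    rw [List.drop_eq_getElem_cons hi1, hSi]
  have hswfilter : sw.filter prd = (w, true) :: (sw.drop (i + 2)).filter prd := by
    conv_lhs => rw [← List.take_append_drop (i + 1) sw]
    rw [List.filter_append, htknil, List.nil_append, hdrop,
      List.filter_cons_of_pos (by simp [hprd])]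
  -- head of c is (w, false)
  set r := (List.range p.length).reverse.filter (fun j => prd (f j)) with hrdef
  have hcform : c = r.map f := by
    rw [hcdef, horig, hrdef, List.filter_map]
    rfl
  have hJr : J ∈ r := by
    rw [hrdef, List.mem_filter, List.mem_reverse, List.mem_range]
    exact ⟨hJlt, by simp [hprd, hf, hJlev]⟩
  have hrsorted : r.Pairwise (fun a b : ℕ => b < a) := by
    have h1 : ((List.range p.length).reverse).Pairwise (fun a b : ℕ => b < a) := by
      rw [List.pairwise_reverse]
      exact List.pairwise_lt_range
    exact h1.sublist List.filter_sublist
  obtain ⟨hd, tl, hrcons⟩ : ∃ hd tl, r = hd :: tl := by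
    cases hr : r with
    | nil => rw [hr] at hJr; exact absurd hJr List.not_mem_nil
    | cons a l => exact ⟨a, l, rfl⟩
  have hhdJ : hd = J := by
    have hhdmem : hd ∈ r := by rw [hrcons]; exact List.mem_cons_self
    have h1 : hd ≤ J := by
      rw [hrdef, List.mem_filter, List.mem_reverse, List.mem_range] at hhdmem
      refine hJmax hd hhdmem.1 ?_
      have h2 := hhdmem.2
      simpa [hprd, hf] using h2
    have h2 := hrcons ▸ hJr
    rcases List.mem_cons.mp h2 with h | h
    · exact h.symm
    · exfalso
      have h3 := hrcons ▸ hrsorted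
      have h4 := (List.pairwise_cons.mp h3).1 J h
      omega
  have hfJ : f J = (w, false) := by
    have h0 : f J = (level k n (p.take J), p.getD J true) := rfl
    rw [h0, hJlev, List.getD_eq_getElem p true hJlt, hpJ]
  have hcfinal : c = (w, false) :: tl.map f := by
    rw [hcform, hrcons, List.map_cons, hhdJ, hfJ]
  have hfinal := hcfinal.symm.trans (hceq.trans hswfilter)
  simp at hfinal
end

section
/- In the sorted level sequence τ of a (kn,n)-Dyck path's sweep map, if σ_i = W with τ_i = mn and σ_{i+1} = σ_{i+2} = S, then τ_{i+1} = τ_{i+2} = mn. -/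
lemma level_dvd (k n : ℕ) (p : List Bool) : (n:ℤ) ∣ level k n p :=
  ⟨(k : ℤ) * p.count true - p.count false, by unfold level; ring⟩

lemma level_take_succ (k n : ℕ) (p : List Bool) (q : ℕ) (hq : q < p.length) :
    level k n (p.take (q+1)) =
      level k n (p.take q) + (if p.getD q true then (k*n:ℤ) else -(n:ℤ)) := by
  have h1 : p[q]? = some (p[q]) := List.getElem?_eq_getElem hq
  have h2 : p.getD q true = p[q] := by rw [List.getD_eq_getElem?_getD, h1]; rfl
  rw [List.take_succ, h1, h2]
  cases h : p[q] <;>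
    simp [level, List.count_append, h, List.count_singleton, List.count_cons] <;> ring

lemma head?_filter_eq {α} (P : α → Bool) : ∀ (L : List α) (j : ℕ) (hj : j < L.length),
    P L[j] → (∀ q (hq : q < j), ¬ P (L[q]'(hq.trans hj))) → (L.filter P).head? = some L[j]
  | a :: t, 0, hj, hP, hq => by simp_all [List.filter_cons]
  | a :: t, j+1, hj, hP, hq => by
      have ha : ¬ P a := hq 0 (Nat.succ_pos _)
      rw [List.filter_cons, if_neg ha, List.getElem_cons_succ]
      exact head?_filter_eq P t j (by simpa using hj) (by simpa using hP)
        (fun q hq' => by simpa using hq (q+1) (by omega))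

section sweepfacts

variable (k n : ℕ) (p : List Bool)

private def f0 : ℕ → ℤ × Bool := fun q => (level k n (p.take q), p.getD q true)

private def l0 : List (ℤ × Bool) := ((List.range p.length).reverse).map (f0 k n p)

private def le0 : (ℤ × Bool) → (ℤ × Bool) → Bool := fun a b => decide (a.1 ≤ b.1)

lemma trans0 : ∀ (a b c : ℤ × Bool), le0 a b → le0 b c → le0 a c := by
  intro a b c
  simp only [le0, decide_eq_true_eq]
  exact le_trans

lemma total0 : ∀ (a b : ℤ × Bool), le0 a b || le0 b a := by
  intro a b
  simp only [le0, Bool.or_eq_true, decide_eq_true_eq]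
  exact le_total _ _

lemma sweep_eq : sweep k n p = (l0 k n p).mergeSort le0 := rfl

lemma sweep_perm : (sweep k n p).Perm (l0 k n p) := by
  rw [sweep_eq]; exact List.mergeSort_perm _ _

lemma sweep_mono (q r : ℕ) (hqr : q ≤ r) (hr : r < (sweep k n p).length) :
    ((sweep k n p)[q]'(lt_of_le_of_lt hqr hr)).1 ≤ ((sweep k n p)[r]).1 := by
  rcases eq_or_lt_of_le hqr with h | h
  · subst h; exact le_refl _
  · have hs : ((l0 k n p).mergeSort le0).Pairwise (le0 · ·) :=
      List.pairwise_mergeSort trans0 total0 _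
    rw [← sweep_eq] at hs
    have := List.pairwise_iff_getElem.mp hs q r (lt_of_le_of_lt hqr hr) hr h
    simpa [le0] using this

lemma sweep_label (j : ℕ) (hj : j < (sweep k n p).length) :
    ∃ q < p.length, (f0 k n p) q = (sweep k n p)[j] := by
  have hmem : (sweep k n p)[j] ∈ l0 k n p :=
    (sweep_perm k n p).mem_iff.mp (List.getElem_mem hj)
  obtain ⟨q, hq, hfq⟩ := List.mem_map.mp hmem
  exact ⟨q, List.mem_range.mp (List.mem_reverse.mp hq), hfq⟩

lemma sweep_label_nonneg (hp : IsDyck k n p) (j : ℕ) (hj : j < (sweep k n p).length) :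
    0 ≤ ((sweep k n p)[j]).1 := by
  obtain ⟨q, hq, hfq⟩ := sweep_label k n p j hj
  rw [← hfq]
  exact hp.2.2 q (le_of_lt hq)

end sweepfacts

lemma key (k n : ℕ) (hn : 0 < n) (p : List Bool) (hp : IsDyck k n p)
    (ℓ : ℤ) (hℓ : 0 < ℓ) (j : ℕ) (hj : j < (sweep k n p).length)
    (h1 : ((sweep k n p)[j]).1 = ℓ) (h2 : ((sweep k n p)[j]).2 = true)
    (h3 : ∀ q (hq : q < j), (((sweep k n p)[q]'(hq.trans hj)).1) < ℓ) : False := by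
  classical
  have hlvl_p : level k n p = 0 := by
    unfold level; rw [hp.1, hp.2.1]; push_cast; ring
  have hjel : (sweep k n p)[j] = (ℓ, true) := Prod.ext h1 h2
  obtain ⟨j₀, hj₀len, hfj₀⟩ := sweep_label k n p j hj
  rw [hjel] at hfj₀
  set P : ℤ × Bool → Bool := fun a => decide (a.1 = ℓ) with hP
  set R : List ℕ := ((List.range p.length).reverse).filter (fun q => P (f0 k n p q)) with hR
  have hj₀R : j₀ ∈ R := List.mem_filter.mpr
    ⟨List.mem_reverse.mpr (List.mem_range.mpr hj₀len), by rw [hfj₀]; simp [hP]⟩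
  have hRne : R ≠ [] := List.ne_nil_of_mem hj₀R
  set r : ℕ := R.head hRne with hrdef
  have hrR : r ∈ R := List.head_mem hRne
  have hrlen : r < p.length := List.mem_range.mp (List.mem_reverse.mp (List.mem_filter.mp hrR).1)
  have hrlvl : level k n (p.take r) = ℓ := by
    have h := (List.mem_filter.mp hrR).2
    simpa [hP, f0] using h
  -- maximality of r
  have hpair : R.Pairwise (fun a b => b < a) := by
    have h1 : ((List.range p.length).reverse).Pairwise (fun a b => b < a) :=
      List.pairwise_reverse.mpr ((List.pairwise_lt_range (n := p.length)))
    exact h1.sublist List.filter_sublist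
  have hcons : R = r :: R.tail := (List.cons_head_tail hRne).symm
  have hmax : ∀ s, s < p.length → level k n (p.take s) = ℓ → s ≤ r := by
    intro s hs hlvl
    have hsR : s ∈ R := List.mem_filter.mpr
      ⟨List.mem_reverse.mpr (List.mem_range.mpr hs), by simp [hP, f0, hlvl]⟩
    rw [hcons] at hsR
    rcases List.mem_cons.mp hsR with h | h
    · omega
    · rw [hcons] at hpair
      exact le_of_lt ((List.pairwise_cons.mp hpair).1 s h)
  have hn' : (0:ℤ) < (n:ℤ) := by exact_mod_cast hn
  have hkpos : (0:ℤ) < (k:ℤ) * (n:ℤ) := by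
    rcases Nat.eq_zero_or_pos k with h0 | h0
    · exfalso
      have : level k n (p.take r) ≤ 0 := by
        unfold level
        rw [h0]
        push_cast
        have : (0:ℤ) ≤ (n:ℤ) * ((p.take r).count false : ℤ) := by positivity
        linarith
      rw [hrlvl] at this
      linarith
    · have : (0:ℤ) < (k:ℤ) := by exact_mod_cast h0
      positivity
  -- the rightmost step at level ℓ is an east step
  have hA : p.getD r true = false := by
    by_contra ht
    rw [Bool.not_eq_false] at ht
    have hQex : ∃ s, r < s ∧ s ≤ p.length ∧ level k n (p.take s) ≤ ℓ :=
      ⟨p.length, hrlen, le_refl _, by rw [List.take_length, hlvl_p]; exact hℓ.le⟩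
    obtain ⟨hs₀r, hs₀len, hs₀lvl⟩ := Nat.find_spec hQex
    set s₀ := Nat.find hQex with hs₀def
    have hne1 : s₀ ≠ r + 1 := by
      intro h
      rw [h, level_take_succ k n p r hrlen, ht, if_pos rfl, hrlvl] at hs₀lvl
      linarith
    have hprev := Nat.find_min hQex (show s₀ - 1 < s₀ by omega)
    push_neg at hprev
    have hgt : ℓ < level k n (p.take (s₀ - 1)) := hprev (by omega) (by omega)
    have hq3 : s₀ - 1 < p.length := by omega
    have hstep := level_take_succ k n p (s₀ - 1) hq3
    rw [show s₀ - 1 + 1 = s₀ by omega] at hstep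
    cases hb : p.getD (s₀ - 1) true
    · rw [hb, if_neg (by simp)] at hstep
      have hlvls₀ : level k n (p.take s₀) = ℓ := by
        obtain ⟨u, hu⟩ := level_dvd k n (p.take r)
        obtain ⟨v, hv⟩ := level_dvd k n (p.take s₀)
        rw [hrlvl] at hu
        have hlow : ℓ - n < level k n (p.take s₀) := by rw [hstep]; linarith
        rw [hu, hv] at hlow hs₀lvl ⊢
        have h1 : u - 1 < v := by
          have : (n:ℤ) * (u - 1) < (n:ℤ) * v := by ring_nf; ring_nf at hlow; linarith
          exact lt_of_mul_lt_mul_left this (le_of_lt hn')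
        have h2 : v ≤ u := le_of_mul_le_mul_left hs₀lvl hn'
        have : u = v := by omega
        rw [this]
      have hs₀lt : s₀ < p.length := by
        rcases lt_or_eq_of_le hs₀len with h | h
        · exact h
        · exfalso; rw [h, List.take_length, hlvl_p] at hlvls₀; exact absurd hlvls₀.symm (ne_of_gt hℓ)
      have := hmax s₀ hs₀lt hlvls₀
      omega
    · rw [hb, if_pos rfl] at hstep
      rw [hstep] at hs₀lvl
      linarith
  -- stability: the filtered block
  set c : List (ℤ × Bool) := (l0 k n p).filter P with hc
  have hRc : c = R.map (f0 k n p) := by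
    rw [hc, hR, l0, List.filter_map]
    rfl
  have hcpair : c.Pairwise (le0 · ·) := by
    apply List.pairwise_of_forall_mem_list
    intro a ha b hb
    have ha' : a.1 = ℓ := by simpa [hP] using (List.mem_filter.mp ha).2
    have hb' : b.1 = ℓ := by simpa [hP] using (List.mem_filter.mp hb).2
    simp [le0, ha', hb']
  have hsubl : List.Sublist c (sweep k n p) := by
    rw [sweep_eq]
    exact List.sublist_mergeSort trans0 total0 hcpair List.filter_sublist
  have hcc : c.filter P = c :=
    List.filter_eq_self.mpr (fun a ha => (List.mem_filter.mp ha).2)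
  have hsub2 : List.Sublist c ((sweep k n p).filter P) := by
    have h' := hsubl.filter P
    rwa [hcc] at h'
  have hlenfil : ((sweep k n p).filter P).length = c.length :=
    ((sweep_perm k n p).filter P).length_eq
  have heq : c = (sweep k n p).filter P := hsub2.eq_of_length hlenfil.symm
  have hhead1 : ((sweep k n p).filter P).head? = some ((sweep k n p)[j]) := by
    apply head?_filter_eq P _ j hj
    · simp [hP, h1]
    · intro q hq
      simp only [hP, decide_eq_true_eq]
      exact fun h => absurd h (ne_of_lt (h3 q hq))
  have hhead2 : c.head? = some (f0 k n p r) := by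
    rw [hRc, List.head?_map, hcons]
    rfl
  rw [heq, hhead1] at hhead2
  rw [hjel] at hhead2
  have : (ℓ, true) = f0 k n p r := by exact Option.some_injective _ hhead2
  rw [f0] at this
  simp only [hA] at this
  exact absurd (congrArg Prod.snd this) (by simp)

/-- Theorem 2.1 (full): in the sorted sweep-map output of a `(kn,n)`-Dyck path,
if `σᵢ = W` with `τᵢ = m·n` and `σᵢ₊₁ = σᵢ₊₂ = S`, then `τᵢ₊₁ = τᵢ₊₂ = m·n`. -/
theorem stmt4 (k n : ℕ) (hn : 0 < n) (p : List Bool) (hp : IsDyck k n p)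
    (m : ℤ) (i : ℕ) (hi : i + 2 < (sweep k n p).length)
    (hW : (sweep k n p).getD i (0, true) = (m * n, false))
    (hS1 : ((sweep k n p).getD (i + 1) (0, true)).2 = true)
    (hS2 : ((sweep k n p).getD (i + 2) (0, true)).2 = true) :
    ((sweep k n p).getD (i + 1) (0, true)).1 = m * n ∧
      ((sweep k n p).getD (i + 2) (0, true)).1 = m * n := by
  have e0 : (sweep k n p).getD i (0, true) = (sweep k n p)[i]'(by omega) :=
    List.getD_eq_getElem _ _ (by omega)
  have e1 : (sweep k n p).getD (i+1) (0, true) = (sweep k n p)[i+1]'(by omega) :=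
    List.getD_eq_getElem _ _ (by omega)
  have e2 : (sweep k n p).getD (i+2) (0, true) = (sweep k n p)[i+2]'(by omega) :=
    List.getD_eq_getElem _ _ (by omega)
  rw [e0] at hW
  rw [e1] at hS1
  rw [e2] at hS2
  rw [e1, e2]
  have hWfst : ((sweep k n p)[i]'(by omega)).1 = m * n := by rw [hW]
  have hnn : 0 ≤ m * (n:ℤ) := by
    have := sweep_label_nonneg k n p hp i (by omega)
    rwa [hWfst] at this
  have hτ1 : ((sweep k n p)[i+1]'(by omega)).1 = m * n := by
    by_contra hne
    have hle1 : m * n ≤ ((sweep k n p)[i+1]'(by omega)).1 := by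
      have := sweep_mono k n p i (i+1) (by omega) (by omega)
      rwa [hWfst] at this
    have hlt : m * n < ((sweep k n p)[i+1]'(by omega)).1 :=
      lt_of_le_of_ne hle1 (Ne.symm hne)
    refine key k n hn p hp _ (lt_of_le_of_lt hnn hlt) (i+1) (by omega) rfl hS1 ?_
    intro q hq
    refine lt_of_le_of_lt ?_ hlt
    have := sweep_mono k n p q i (by omega) (by omega)
    rwa [hWfst] at this
  have hτ2 : ((sweep k n p)[i+2]'(by omega)).1 = m * n := by
    by_contra hne
    have hle1 : m * n ≤ ((sweep k n p)[i+2]'(by omega)).1 := by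
      have := sweep_mono k n p (i+1) (i+2) (by omega) (by omega)
      rwa [hτ1] at this
    have hlt : m * n < ((sweep k n p)[i+2]'(by omega)).1 :=
      lt_of_le_of_ne hle1 (Ne.symm hne)
    refine key k n hn p hp _ (lt_of_le_of_lt hnn hlt) (i+2) (by omega) rfl hS2 ?_
    intro q hq
    refine lt_of_le_of_lt ?_ hlt
    have hq1 : q ≤ i + 1 := by omega
    have := sweep_mono k n p q (i+1) hq1 (by omega)
    rwa [hτ1] at this
  exact ⟨hτ1, hτ2⟩
end

section
/- In the sorted level sequence τ of the sweep map of a (kn,n)-Dyck path, for any level value v = mn, the number of W's with level v+n equals (number of entries with level v) minus (number of S's with level v − kn), whenever this difference is nonnegative. -/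
lemma level_append (k n : ℕ) (q : List Bool) (b : Bool) :
    level k n (q ++ [b]) = level k n q + (if b then (k*n:ℤ) else -(n:ℤ)) := by
  cases b <;> simp [level, List.count_append] <;> ring

lemma key_s8 (k n : ℕ) (v : ℤ) (p : List Bool) :
    (List.range p.length).countP (fun i => decide (level k n (p.take i) = v))
      + (if level k n p = v then 1 else 0)
    = (if v = 0 then 1 else 0)
      + (List.range p.length).countP
          (fun i => decide (level k n (p.take i) = v + n) && !(p.getD i true))
      + (List.range p.length).countP
          (fun i => decide (level k n (p.take i) = v - k*n) && (p.getD i true)) := by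
  induction p using List.reverseRecOn with
  | nil => simp [level, eq_comm]
  | append_singleton q b ih =>
    have hlen : (q ++ [b]).length = q.length + 1 := by simp
    have htake : ∀ i ∈ List.range q.length, (q ++ [b]).take i = q.take i := by
      intro i hi
      rw [List.mem_range] at hi
      exact List.take_append_of_le_length (le_of_lt hi)
    have hgetD : ∀ i ∈ List.range q.length, (q ++ [b]).getD i true = q.getD i true := by
      intro i hi
      rw [List.mem_range] at hi
      simp [List.getD, List.getElem?_append_left hi]
    have htakeq : (q ++ [b]).take q.length = q := by
      simp
    have hgetDq : (q ++ [b]).getD q.length true = b := by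
      simp [List.getD]
    rw [hlen, List.range_succ]
    rw [List.countP_append, List.countP_append, List.countP_append]
    rw [List.countP_congr (l := List.range q.length)
        (p := fun i => decide (level k n ((q ++ [b]).take i) = v))
        (q := fun i => decide (level k n (q.take i) = v))
        (fun i hi => by simp only [htake i hi]),
      List.countP_congr (l := List.range q.length)
        (p := fun i => decide (level k n ((q ++ [b]).take i) = v + n) && !((q ++ [b]).getD i true))
        (q := fun i => decide (level k n (q.take i) = v + n) && !(q.getD i true))
        (fun i hi => by simp only [htake i hi, hgetD i hi]),
      List.countP_congr (l := List.range q.length)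
        (p := fun i => decide (level k n ((q ++ [b]).take i) = v - k*n) && ((q ++ [b]).getD i true))
        (q := fun i => decide (level k n (q.take i) = v - k*n) && (q.getD i true))
        (fun i hi => by simp only [htake i hi, hgetD i hi])]
    simp only [List.countP_singleton, htakeq, hgetDq, level_append]
    cases b <;> simp only [Bool.not_false, Bool.not_true, Bool.and_true, Bool.and_false,
      if_true, if_false, Bool.true_and, Bool.false_and, decide_eq_true_eq,
      Bool.false_eq_true] <;>
      split_ifs at ih ⊢ <;> omega

/-- Counting rule for the inversion algorithm: in the sweep output of a `(kn,n)`-Dyck path,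
for a level value `v = m·n`, the number of `W`'s with level `v + n` equals the number of
entries with level `v` minus the number of `S`'s with level `v - kn`,
whenever this difference is nonnegative. -/
theorem stmt8 (k n : ℕ) (hn : 0 < n) (p : List Bool) (hp : IsDyck k n p) (m : ℤ)
    (hnonneg : (sweep k n p).countP (fun a => decide (a.1 = m * n - k * n) && a.2) ≤
      (sweep k n p).countP (fun a => decide (a.1 = m * n))) :
    (sweep k n p).countP (fun a => decide (a.1 = m * n + n) && !a.2) =
      (sweep k n p).countP (fun a => decide (a.1 = m * n)) -
        (sweep k n p).countP (fun a => decide (a.1 = m * n - k * n) && a.2) := by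
  have hcount : ∀ q : ℤ × Bool → Bool, (sweep k n p).countP q =
      (List.range p.length).countP
        (fun i => q (level k n (p.take i), p.getD i true)) := by
    intro q
    unfold sweep
    rw [(List.mergeSort_perm _ _).countP_eq, List.countP_map,
      (List.reverse_perm _).countP_eq]
    rfl
  rw [hcount, hcount, hcount] at *
  have hzero : level k n p = 0 := by
    simp only [level, hp.1, hp.2.1]
    push_cast
    ring
  have hk := key_s8 k n (m * n) p
  rw [hzero] at hk
  simp only [decide_eq_true_eq] at *
  have hiff : (0 = m * n) ↔ (m * n = 0) := eq_comm
  split_ifs at hk with h1 h2 h2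
  · omega
  · exact absurd (hiff.mp h1) h2
  · exact absurd (hiff.mpr h2) h1
  · omega
end

section
/- The inversion algorithm recovers the level sequence: given the S/W output word σ of the sweep map on a (kn,n)-Dyck path, the sequence τ produced by setting τ_1 = 0, setting τ_i = τ_{i−1} when σ_i = S, and for σ_i = W assigning levels by the counting rule (difference x of entries at level τ_{i−1} and S's at level τ_{i−1}−kn determines whether the next x W's get level τ_{i−1}+n or τ_{i−1}), equals the true sorted level sequence of the path. -/
/-- Assign level `v` to the positions of the next `x` `W`'s of `σ` among the
remaining positions `idxs`. -/
def assignW (σ : List Bool) (v : ℤ) : List ℕ → ℕ → Array (Option ℤ) → Array (Option ℤ)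
  | _, 0, A => A
  | [], _ + 1, A => A
  | i :: rest, x + 1, A =>
      if σ.getD i true = false then assignW σ v rest x (A.set! i (some v))
      else assignW σ v rest (x + 1) A

/-- One step of the inversion algorithm at position `i` (0-indexed). -/
def invertStep (k n : ℕ) (σ : List Bool) (A : Array (Option ℤ)) (i : ℕ) :
    Array (Option ℤ) :=
  if (A.getD i none).isSome then A
  else
    match A.getD (i - 1) none with
    | none => A
    | some t =>
      if σ.getD i true = true then A.set! i (some t)
      else
        let cntEq : ℤ := A.toList.countP (fun a => decide (a = some t))
        let cntS : ℤ := (List.range σ.length).countP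
          (fun j => decide (A.getD j none = some (t - k * n)) &&
            decide (σ.getD j true = true))
        let x : ℤ := cntEq - cntS
        if 0 < x then assignW σ (t + n) ((List.range σ.length).drop i) x.toNat A
        else assignW σ t ((List.range σ.length).drop i) (-x).toNat A

/-- The inversion algorithm of Theorem 2.2: `τ₁ = 0`, then loop over the remaining
positions, filling in levels by the counting rule. -/
def invert (k n : ℕ) (σ : List Bool) : Array (Option ℤ) :=
  ((List.range σ.length).drop 1).foldl (invertStep k n σ)
    ((Array.replicate σ.length (none : Option ℤ)).set! 0 (some 0))



namespace SweepAux
open List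

lemma arr_toList_setD {α} (a : Array α) (i : ℕ) (v : α) :
    (a.setIfInBounds i v).toList = a.toList.set i v := by
  simp

lemma arr_getD {α} (a : Array α) (i : ℕ) (d : α) :
    a.getD i d = a.toList.getD i d := by
  simp [Array.getD_eq_getD_getElem?, List.getD_eq_getElem?_getD]

lemma countP_range_getD {α} (l : List α) (d : α) (p : α → Bool) :
    (List.range l.length).countP (fun j => p (l.getD j d)) = l.countP p := by
  induction l with
  | nil => simp
  | cons a t ih =>
    rw [List.length_cons, List.range_succ_eq_map, List.countP_cons, List.countP_map,
      List.countP_cons]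
    simp only [List.getD_cons_zero, Function.comp_def, Nat.succ_eq_add_one,
      List.getD_cons_succ]
    rw [ih]

lemma map_range_getD {α} (l : List α) (d : α) :
    (List.range l.length).map (fun j => l.getD j d) = l := by
  apply List.ext_getElem
  · simp
  · intro i h1 h2
    simp [List.getD_eq_getElem _ _ h2, List.getElem?_eq_getElem h2]

lemma countP_split {α} (l : List α) (A B C : α → Bool)
    (h : ∀ x ∈ l, (A x = true ↔ (B x = true ∨ C x = true)) ∧ ¬(B x = true ∧ C x = true)) :
    l.countP A = l.countP B + l.countP C := by
  induction l with
  | nil => simp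
  | cons a t ih =>
    simp only [List.countP_cons]
    have ha := h a List.mem_cons_self
    rw [ih (fun x hx => h x (List.mem_cons_of_mem _ hx))]
    cases hA : A a <;> cases hB : B a <;> cases hC : C a <;> simp_all <;> omega

lemma le_getLast_of_pairwise_lt : ∀ (l : List ℕ) (hl : l ≠ []),
    l.Pairwise (· < ·) → ∀ x ∈ l, x ≤ l.getLast hl
  | [a], _, _, x, hx => by simp_all
  | a :: b :: t, _, h, x, hx => by
    rw [List.getLast_cons (by simp)]
    rcases List.mem_cons.1 hx with rfl | hx'
    · exact le_of_lt ((List.pairwise_cons.1 h).1 _ (List.getLast_mem _))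
    · exact le_getLast_of_pairwise_lt (b :: t) (by simp) (List.pairwise_cons.1 h).2 x hx'

lemma filter_split (P R : ℕ → Bool) : ∀ (l : List ℕ),
    l.Pairwise (fun a b => R b = true → R a = true) →
    l.filter P = l.filter (fun j => P j && R j) ++ l.filter (fun j => P j && !R j)
  | [], _ => by simp
  | a :: t, h => by
    obtain ⟨h1, h2⟩ := List.pairwise_cons.1 h
    have iht := filter_split P R t h2
    by_cases hR : R a = true
    · by_cases hP : P a = true <;>
        simp [List.filter_cons, hR, hP, iht]
    · have hall : ∀ b ∈ t, R b = false := by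
        intro b hb
        by_contra hc
        exact hR (h1 b hb (by simpa using hc))
      have e1 : t.filter (fun j => P j && R j) = [] := by
        rw [List.filter_eq_nil_iff]
        intro b hb
        simp [hall b hb]
      have e2 : List.filter (fun j => P j && !R j) (a :: t) = List.filter P (a :: t) := by
        apply List.filter_congr
        intro b hb
        rcases List.mem_cons.1 hb with rfl | hb'
        · simp [hR]
        · simp [hall b hb']
      have e3 : List.filter (fun j => P j && R j) (a :: t) = [] := by
        rw [List.filter_cons]
        simp [hR, e1]
      rw [e2, e3, List.nil_append]

end SweepAux

namespace SweepAux
open List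

lemma assignW_spec (σ : List Bool) (v : ℤ) : ∀ (idxs : List ℕ) (w : ℕ) (A : Array (Option ℤ)),
    assignW σ v idxs w A =
      ((idxs.filter (fun j => !σ.getD j true)).take w).foldl
        (fun B j => B.set! j (some v)) A
  | [], w, A => by cases w <;> simp [assignW]
  | i :: rest, 0, A => by simp [assignW]
  | i :: rest, w + 1, A => by
    rw [assignW]
    by_cases h : σ.getD i true = false
    · rw [if_pos h, assignW_spec σ v rest w (A.set! i (some v))]
      rw [List.getD_eq_getElem?_getD] at h
      simp [List.filter_cons, h]
    · rw [if_neg h, assignW_spec σ v rest (w + 1) A]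
      have h' : σ.getD i true = true := by simpa using h
      rw [List.getD_eq_getElem?_getD] at h'
      simp [List.filter_cons, h']

lemma foldl_set_toList (v : Option ℤ) : ∀ (L : List ℕ) (A : Array (Option ℤ)),
    (L.foldl (fun B j => B.set! j v) A).toList =
      (List.range A.toList.length).map (fun j => if j ∈ L then v else A.toList.getD j none)
  | [], A => by
    simpa using (map_range_getD A.toList none).symm
  | a :: L, A => by
    rw [List.foldl_cons, foldl_set_toList v L (A.set! a v)]
    simp only [Array.set!_eq_setIfInBounds]
    have hset : (A.setIfInBounds a v).toList = A.toList.set a v := arr_toList_setD A a v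
    have hlen : (A.setIfInBounds a v).toList.length = A.toList.length := by simp [hset]
    rw [hlen]
    apply List.map_congr_left
    intro j hj
    have hjlt : j < A.toList.length := List.mem_range.1 hj
    by_cases hja : j = a
    · subst hja
      have : (A.setIfInBounds j v).toList.getD j none = v := by
        rw [hset, List.getD_eq_getElem _ _ (by simpa using hjlt)]
        simp [List.getElem_set]
      rw [List.getD_eq_getElem?_getD] at this
      simp [this, List.getElem?_set, show j < A.size by simpa using hjlt]
    · have : (A.setIfInBounds a v).toList.getD j none = A.toList.getD j none := by
        rw [hset, List.getD_eq_getElem _ _ (by simpa using hjlt),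
          List.getD_eq_getElem _ _ hjlt]
        have hne : ¬ a = j := fun h => hja h.symm
        simp [List.getElem_set, hne]
      rw [this]
      have : (j ∈ a :: L) ↔ (j ∈ L) := by simp [hja]
      simp only [this]

end SweepAux

namespace SweepAux
open List

def fs (s : List (ℤ × Bool)) (j : ℕ) : ℤ := (s.getD j (0, true)).1
def sn (s : List (ℤ × Bool)) (j : ℕ) : Bool := (s.getD j (0, true)).2

def cnd (s : List (ℤ × Bool)) (i j : ℕ) : Prop :=
  j < i ∨ (sn s j = false ∧ fs s j = fs s (i - 1))

instance (s : List (ℤ × Bool)) (i j : ℕ) : Decidable (cnd s i j) := by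
  unfold cnd; infer_instance

def mdl (s : List (ℤ × Bool)) (i : ℕ) : List (Option ℤ) :=
  (List.range s.length).map fun j => if cnd s i j then some (fs s j) else none

lemma mdl_length (s : List (ℤ × Bool)) (i : ℕ) : (mdl s i).length = s.length := by
  simp [mdl]

lemma mdl_getD (s : List (ℤ × Bool)) (i j : ℕ) (hj : j < s.length) :
    (mdl s i).getD j none = if cnd s i j then some (fs s j) else none := by
  rw [List.getD_eq_getElem _ _ (by simpa [mdl_length] using hj)]
  simp [mdl]

lemma sn_bridge (s : List (ℤ × Bool)) (j : ℕ) :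
    (s.map Prod.snd).getD j true = sn s j := by
  by_cases hj : j < s.length
  · rw [List.getD_eq_getElem _ _ (by simpa using hj), sn,
      List.getD_eq_getElem _ _ hj]
    simp
  · rw [List.getD_eq_default _ _ (by simpa using Nat.le_of_not_lt hj), sn,
      List.getD_eq_default _ _ (Nat.le_of_not_lt hj)]

lemma fs_mem (s : List (ℤ × Bool)) (j : ℕ) (hj : j < s.length) :
    s.getD j (0, true) ∈ s := by
  rw [List.getD_eq_getElem _ _ hj]
  exact List.getElem_mem hj

lemma mem_drop_range (N i j : ℕ) : j ∈ (List.range N).drop i ↔ i ≤ j ∧ j < N := by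
  constructor
  · intro h
    obtain ⟨m, hm, rfl⟩ := List.getElem_of_mem h
    rw [List.getElem_drop, List.getElem_range]
    have := hm
    simp only [List.length_drop, List.length_range] at this
    omega
  · intro ⟨h1, h2⟩
    have hm : j - i < ((List.range N).drop i).length := by
      simp only [List.length_drop, List.length_range]; omega
    have : ((List.range N).drop i)[j - i] = j := by
      rw [List.getElem_drop, List.getElem_range]; omega
    rw [← this]
    exact List.getElem_mem hm

end SweepAux

namespace SweepAux
open List

theorem step_lemma (k n : ℕ) (hn : 0 < n) (s : List (ℤ × Bool))
    (hsort : ∀ a b : ℕ, a ≤ b → b < s.length → fs s a ≤ fs s b)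
    (hP3 : ∀ v ℓ : ℤ, (∃ a ∈ s, a.1 = v) → (∃ a ∈ s, a.1 = ℓ) → v < ℓ →
      ∃ a ∈ s, a.1 = v + n)
    (hdvd : ∀ a ∈ s, (n : ℤ) ∣ a.1)
    (hP4 : ∀ t : ℤ, s.countP (fun a => a.1 = t) =
      s.countP (fun a => a = (t - k * n, true)) + s.countP (fun a => a = (t + n, false)))
    (hP5 : ∀ m : ℕ, m + 1 < s.length → fs s (m + 1) ≠ fs s m → sn s (m + 1) = false)
    (i : ℕ) (hi1 : 1 ≤ i) (hiN : i < s.length)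
    (A : Array (Option ℤ)) (hA : A.toList = mdl s i) :
    (invertStep k n (s.map Prod.snd) A i).toList = mdl s (i + 1) := by
  have hAget : ∀ j, j < s.length →
      A.getD j none = if cnd s i j then some (fs s j) else none := by
    intro j hj; rw [arr_getD, hA, mdl_getD _ _ _ hj]
  have hiw : i - 1 + 1 = i := by omega
  have hprev : A.getD (i - 1) none = some (fs s (i - 1)) := by
    rw [hAget (i - 1) (by omega), if_pos (show cnd s i (i-1) from Or.inl (by omega))]
  by_cases hc : sn s i = false ∧ fs s i = fs s (i - 1)
  · -- already assigned: i is a W at the current level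
    have hgi : A.getD i none = some (fs s i) := by
      rw [hAget i hiN, if_pos (show cnd s i i from Or.inr ⟨hc.1, hc.2⟩)]
    unfold invertStep
    rw [hgi]
    simp only [Option.isSome_some, if_true]
    rw [hA]
    unfold mdl
    apply List.map_congr_left
    intro j hj
    have hj' : j < s.length := List.mem_range.1 hj
    have hiff : cnd s i j ↔ cnd s (i + 1) j := by
      unfold cnd
      have e : fs s (i + 1 - 1) = fs s (i - 1) := by
        simp only [Nat.add_sub_cancel]; exact hc.2
      rw [e]
      constructor
      · rintro (h | h)
        · exact Or.inl (by omega)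
        · exact Or.inr h
      · rintro (h | h)
        · rcases Nat.lt_succ_iff_lt_or_eq.1 h with h' | rfl
          · exact Or.inl h'
          · exact Or.inr ⟨hc.1, hc.2⟩
        · exact Or.inr h
    simp only [hiff]
  · -- not yet assigned
    have hgi : A.getD i none = none := by
      rw [hAget i hiN, if_neg]
      rintro (h | h)
      · omega
      · exact hc h
    unfold invertStep
    rw [hgi, hprev]
    simp only [Option.isSome_none, Bool.false_eq_true, if_false]
    by_cases hsni : sn s i = true
    · -- S step: copies previous level
      rw [if_pos (by rw [sn_bridge]; exact hsni)]
      have hfsi : fs s i = fs s (i - 1) := by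
        by_contra hne
        have h5 := hP5 (i - 1) (by rw [hiw]; exact hiN) (by rw [hiw]; exact hne)
        rw [hiw] at h5
        rw [h5] at hsni
        exact absurd hsni (by simp)
      simp only [Array.set!_eq_setIfInBounds]
      rw [arr_toList_setD, hA]
      apply List.ext_getElem
      · simp [mdl_length, mdl]
      intro j h1 h2
      have hj : j < s.length := by simpa [mdl_length] using h2
      rw [List.getElem_set]
      have hmg : ∀ (m : ℕ) (hm2 : j < (mdl s m).length),
          (mdl s m)[j] = if cnd s m j then some (fs s j) else none := by
        intro m hm2
        simp [mdl]
      rw [hmg (i + 1) h2]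
      by_cases hij : i = j
      · subst hij
        rw [if_pos rfl, if_pos]
        · rw [hfsi]
        · exact Or.inl (by omega)
      · rw [if_neg hij, hmg i (by simpa [mdl_length] using hj)]
        have hiff : cnd s i j ↔ cnd s (i + 1) j := by
          unfold cnd
          have e : fs s (i + 1 - 1) = fs s (i - 1) := by
            simp only [Nat.add_sub_cancel]; exact hfsi
          rw [e]
          constructor
          · rintro (h | h)
            · exact Or.inl (by omega)
            · exact Or.inr h
          · rintro (h | h)
            · rcases Nat.lt_succ_iff_lt_or_eq.1 h with h' | h''
              · exact Or.inl h'
              · exact absurd h''.symm hij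
            · exact Or.inr h
        simp only [hiff]
    · -- W step: new level
      have hsnf : sn s i = false := by simpa using hsni
      rw [if_neg (by rw [sn_bridge, hsnf]; simp)]
      have hne : fs s i ≠ fs s (i - 1) := fun h => hc ⟨hsnf, h⟩
      have htlt : fs s (i - 1) < fs s i :=
        lt_of_le_of_ne (hsort (i - 1) i (by omega) hiN) (Ne.symm hne)
      have hlt_of_le : ∀ j, j < s.length → fs s j < fs s i → j < i := by
        intro j hj hfj
        by_contra hge
        exact absurd (hsort i j (by omega) hj) (by omega)
      -- the new level is fs s (i-1) + n
      have hfsi : fs s i = fs s (i - 1) + n := by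
        obtain ⟨a, ha, hav⟩ := hP3 (fs s (i - 1)) (fs s i)
          ⟨s.getD (i - 1) (0, true), fs_mem s (i - 1) (by omega), rfl⟩
          ⟨s.getD i (0, true), fs_mem s i hiN, rfl⟩ htlt
        obtain ⟨j, hjN, rfl⟩ := List.getElem_of_mem ha
        have hfj : fs s j = fs s (i - 1) + n := by
          rw [fs, List.getD_eq_getElem _ _ hjN]; exact hav
        have hd1 : (n : ℤ) ∣ fs s i - fs s (i - 1) := by
          have d1 := hdvd _ (fs_mem s i hiN)
          have d2 := hdvd _ (fs_mem s (i - 1) (show i - 1 < s.length by omega))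
          rw [← fs] at d1 d2  -- fs is definitional
          exact dvd_sub d1 d2
        have hge : fs s (i - 1) + n ≤ fs s i := by
          have := Int.le_of_dvd (by omega) hd1
          omega
        -- also fs s i ≤ fs s (i-1) + n using the witness j
        have hle : fs s i ≤ fs s (i - 1) + n := by
          by_cases hji : j < i
          · have := hsort j (i - 1) (by omega) (by omega)
            omega
          · have := hsort i j (by omega) hjN
            omega
        omega
      have hfsdef : ∀ j : ℕ, (s.getD j (0, true)).1 = fs s j := fun _ => rfl
      have hsndef : ∀ j : ℕ, (s.getD j (0, true)).2 = sn s j := fun _ => rfl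
      have hcntEq : A.toList.countP (fun a => a = some (fs s (i - 1))) =
          s.countP (fun a => a.1 = fs s (i - 1)) := by
        rw [hA]
        unfold mdl
        rw [List.countP_map,
          ← countP_range_getD s (0, true) (fun a => a.1 = fs s (i - 1))]
        apply List.countP_congr
        intro j hj
        have hjN : j < s.length := List.mem_range.1 hj
        simp only [Function.comp, decide_eq_true_eq]
        rw [hfsdef]
        constructor
        · intro h
          by_cases hcnd : cnd s i j
          · rw [if_pos hcnd] at h
            exact Option.some.inj h
          · rw [if_neg hcnd] at h
            cases h
        · intro h
          have hji : j < i := hlt_of_le j hjN (by omega)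
          rw [if_pos (show cnd s i j from Or.inl hji), h]
      have hkn : (0 : ℤ) ≤ (k : ℤ) * n := by positivity
      have hcntS : ((List.range (s.map Prod.snd).length).countP fun j =>
          decide (A.getD j none = some (fs s (i - 1) - ↑k * ↑n)) &&
            decide ((s.map Prod.snd).getD j true = true)) =
          s.countP (fun a => a = (fs s (i - 1) - ↑k * ↑n, true)) := by
        rw [List.length_map,
          ← countP_range_getD s (0, true) (fun a => a = (fs s (i - 1) - ↑k * ↑n, true))]
        apply List.countP_congr
        intro j hj
        have hjN : j < s.length := List.mem_range.1 hj
        rw [hAget j hjN, sn_bridge]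
        simp only [Bool.and_eq_true, decide_eq_true_eq, Prod.ext_iff]
        rw [hfsdef, hsndef]
        constructor
        · rintro ⟨h1, h2⟩
          by_cases hcnd : cnd s i j
          · rw [if_pos hcnd] at h1
            exact ⟨Option.some.inj h1, h2⟩
          · rw [if_neg hcnd] at h1
            cases h1
        · rintro ⟨h1, h2⟩
          have hji : j < i := hlt_of_le j hjN (by
            rw [h1]
            have : fs s (i - 1) < fs s i := htlt
            linarith)
          refine ⟨?_, h2⟩
          rw [if_pos (show cnd s i j from Or.inl hji), h1]
      -- positivity of the count of W's at the new level
      have hW : 0 < s.countP (fun a => a = (fs s (i - 1) + ↑n, false)) := by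
        rw [List.countP_pos_iff]
        refine ⟨s.getD i (0, true), fs_mem s i hiN, ?_⟩
        simp only [decide_eq_true_eq, Prod.ext_iff]
        exact ⟨hfsi, hsnf⟩
      simp only [hcntEq, hP4 (fs s (i - 1)), hcntS]
      rw [if_pos (show (0:ℤ) <
        ↑(s.countP (fun a => a = (fs s (i - 1) - ↑k * ↑n, true)) +
          s.countP (fun a => a = (fs s (i - 1) + ↑n, false))) -
        ↑(s.countP (fun a => a = (fs s (i - 1) - ↑k * ↑n, true))) by push_cast; omega)]
      have hxt : ((↑(s.countP (fun a => a = (fs s (i - 1) - ↑k * ↑n, true)) +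
          s.countP (fun a => a = (fs s (i - 1) + ↑n, false))) : ℤ) -
        ↑(s.countP (fun a => a = (fs s (i - 1) - ↑k * ↑n, true)))).toNat =
          s.countP (fun a => a = (fs s (i - 1) + ↑n, false)) := by omega
      rw [hxt, assignW_spec]
      simp only [List.length_map]
      -- split the filtered list
      have hpair : ((List.range s.length).drop i).Pairwise
          (fun a b => (decide (fs s b = fs s (i - 1) + ↑n) = true) →
            (decide (fs s a = fs s (i - 1) + ↑n) = true)) := by
        rw [List.pairwise_iff_getElem]
        intro a b ha hb hab h
        simp only [List.getElem_drop, List.getElem_range] at h ⊢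
        simp only [List.length_drop, List.length_range] at ha hb
        simp only [decide_eq_true_eq] at h ⊢
        have h1 := hsort i (i + a) (by omega) (by omega)
        have h2 := hsort (i + a) (i + b) (by omega) (by omega)
        omega
      rw [filter_split _ (fun j => decide (fs s j = fs s (i - 1) + ↑n)) _ hpair]
      set Pr : ℕ → Bool := fun j => ((!(s.map Prod.snd).getD j true) &&
        decide (fs s j = fs s (i - 1) + ↑n)) with hPr
      have hlenQ : (((List.range s.length).drop i).filter Pr).length =
          s.countP (fun a => a = (fs s (i - 1) + ↑n, false)) := by
        rw [← List.countP_eq_length_filter]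
        have hto : List.range s.length = List.range i ++ (List.range s.length).drop i := by
          conv_lhs => rw [← List.take_append_drop i (List.range s.length)]
          congr 1
          rw [List.take_range]
          congr 1
          omega
        have hzero : (List.range i).countP Pr = 0 := by
          rw [List.countP_eq_zero]
          intro j hj
          have hji : j < i := List.mem_range.1 hj
          have := hsort j (i - 1) (by omega) (by omega)
          rw [hPr]
          simp only [Bool.and_eq_true, decide_eq_true_eq, not_and]
          intro _
          omega
        have htot : (List.range s.length).countP Pr =
            s.countP (fun a => a = (fs s (i - 1) + ↑n, false)) := by
          rw [← countP_range_getD s (0, true) (fun a => a = (fs s (i - 1) + ↑n, false))]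
          apply List.countP_congr
          intro j hj
          rw [hPr]
          simp only
          rw [sn_bridge]
          simp only [Bool.and_eq_true, Bool.not_eq_true', decide_eq_true_eq,
            Prod.ext_iff]
          rw [hfsdef, hsndef]
          tauto
        rw [hto, List.countP_append] at htot
        omega
      rw [← hlenQ, List.take_left, foldl_set_toList]
      have hAlen : A.toList.length = s.length := by rw [hA, mdl_length]
      rw [hAlen]
      unfold mdl
      apply List.map_congr_left
      intro j hj
      have hjN : j < s.length := List.mem_range.1 hj
      have hgj : A.toList.getD j none = if cnd s i j then some (fs s j) else none := by
        rw [hA, mdl_getD _ _ _ hjN]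
      have hmem : j ∈ ((List.range s.length).drop i).filter Pr ↔
          (i ≤ j ∧ sn s j = false ∧ fs s j = fs s (i - 1) + ↑n) := by
        rw [List.mem_filter, mem_drop_range, hPr]
        simp only
        rw [sn_bridge]
        simp only [Bool.and_eq_true, Bool.not_eq_true', decide_eq_true_eq]
        constructor
        · rintro ⟨⟨h1, _⟩, h2, h3⟩
          exact ⟨h1, h2, h3⟩
        · rintro ⟨h1, h2, h3⟩
          exact ⟨⟨h1, hjN⟩, h2, h3⟩
      have e1 : fs s (i + 1 - 1) = fs s i := by simp only [Nat.add_sub_cancel]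
      by_cases hq : j ∈ ((List.range s.length).drop i).filter Pr
      · rw [if_pos hq]
        obtain ⟨h1, h2, h3⟩ := hmem.1 hq
        rw [if_pos (show cnd s (i + 1) j from Or.inr ⟨h2, by rw [e1, h3, hfsi]⟩), h3]
      · rw [if_neg hq, hgj]
        have hnm := fun h => hq (hmem.2 h)
        have hiff : cnd s i j ↔ cnd s (i + 1) j := by
          unfold cnd
          rw [e1]
          constructor
          · rintro (h | h)
            · exact Or.inl (by omega)
            · have hji : j < i := hlt_of_le j hjN (by omega)
              exact Or.inl (by omega)
          · rintro (h | h)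
            · rcases Nat.lt_succ_iff_lt_or_eq.1 h with h' | h''
              · exact Or.inl h'
              · subst h''
                exact absurd ⟨le_refl j, hsnf, hfsi⟩ hnm
            · by_cases hji : j < i
              · exact Or.inl hji
              · exact absurd ⟨by omega, h.1, by rw [h.2, hfsi]⟩ hnm
        simp only [hiff]



end SweepAux

namespace SweepAux
open List

theorem fold_aux (k n : ℕ) (hn : 0 < n) (s : List (ℤ × Bool))
    (hsort : ∀ a b : ℕ, a ≤ b → b < s.length → fs s a ≤ fs s b)
    (hP3 : ∀ v ℓ : ℤ, (∃ a ∈ s, a.1 = v) → (∃ a ∈ s, a.1 = ℓ) → v < ℓ →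
      ∃ a ∈ s, a.1 = v + n)
    (hdvd : ∀ a ∈ s, (n : ℤ) ∣ a.1)
    (hP4 : ∀ t : ℤ, s.countP (fun a => a.1 = t) =
      s.countP (fun a => a = (t - k * n, true)) + s.countP (fun a => a = (t + n, false)))
    (hP5 : ∀ m : ℕ, m + 1 < s.length → fs s (m + 1) ≠ fs s m → sn s (m + 1) = false) :
    ∀ (m i : ℕ) (A : Array (Option ℤ)), 1 ≤ i → s.length = i + m → A.toList = mdl s i →
    ((((List.range (s.map Prod.snd).length).drop i)).foldl
        (invertStep k n (s.map Prod.snd)) A).toList = mdl s s.length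
  | 0, i, A, hi1, hNm, hA => by
    have hdrop : ((List.range (s.map Prod.snd).length).drop i) = [] := by
      apply List.drop_eq_nil_of_le
      simp only [List.length_range, List.length_map]
      omega
    rw [hdrop, List.foldl_nil, hA]
    congr 1
    omega
  | m + 1, i, A, hi1, hNm, hA => by
    have hiN : i < s.length := by omega
    have hdrop : ((List.range (s.map Prod.snd).length).drop i) =
        i :: ((List.range (s.map Prod.snd).length).drop (i + 1)) := by
      rw [List.drop_eq_getElem_cons (by simp only [List.length_range, List.length_map]; exact hiN)]
      congr 1
      exact List.getElem_range _
    rw [hdrop, List.foldl_cons]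
    exact fold_aux k n hn s hsort hP3 hdvd hP4 hP5 m (i + 1) _ (by omega) (by omega)
      (step_lemma k n hn s hsort hP3 hdvd hP4 hP5 i hi1 hiN A hA)

theorem invert_eq (k n : ℕ) (hn : 0 < n) (s : List (ℤ × Bool))
    (hsort : ∀ a b : ℕ, a ≤ b → b < s.length → fs s a ≤ fs s b)
    (hP3 : ∀ v ℓ : ℤ, (∃ a ∈ s, a.1 = v) → (∃ a ∈ s, a.1 = ℓ) → v < ℓ →
      ∃ a ∈ s, a.1 = v + n)
    (hdvd : ∀ a ∈ s, (n : ℤ) ∣ a.1)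
    (hP4 : ∀ t : ℤ, s.countP (fun a => a.1 = t) =
      s.countP (fun a => a = (t - k * n, true)) + s.countP (fun a => a = (t + n, false)))
    (hP5 : ∀ m : ℕ, m + 1 < s.length → fs s (m + 1) ≠ fs s m → sn s (m + 1) = false)
    (h0 : 0 < s.length → fs s 0 = 0)
    (hW0 : ∀ a ∈ s, a.1 = 0 → a.2 = true) :
    (invert k n (s.map Prod.snd)).toList = s.map (fun a => some a.1) := by
  by_cases hN : s.length = 0
  · rw [List.eq_nil_of_length_eq_zero hN]
    simp [invert, Array.set!_eq_setIfInBounds]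
  · have hN1 : 1 ≤ s.length := by omega
    have hinit : ((Array.replicate (s.map Prod.snd).length (none : Option ℤ)).set! 0
        (some 0)).toList = mdl s 1 := by
      simp only [Array.set!_eq_setIfInBounds]
      rw [arr_toList_setD, Array.toList_replicate]
      apply List.ext_getElem
      · simp [mdl_length]
      intro j h1 h2
      have hjN : j < s.length := by simpa [mdl_length] using h2
      rw [List.getElem_set]
      have hmg : (mdl s 1)[j]'h2 = if cnd s 1 j then some (fs s j) else none := by
        simp [mdl]
      rw [hmg]
      by_cases hj0 : 0 = j
      · rw [if_pos hj0, if_pos (show cnd s 1 j from Or.inl (by omega))]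
        rw [← hj0, h0 (by omega)]
      · rw [if_neg hj0, List.getElem_replicate, if_neg]
        rintro (h | ⟨h1', h2'⟩)
        · omega
        · have := hW0 (s.getD j (0, true)) (fs_mem s j hjN)
            (by rw [show (s.getD j (0, true)).1 = fs s j from rfl, h2']
                exact h0 (by omega))
        -- this : a.2 = true, but sn s j = false
          rw [show (s.getD j (0, true)).2 = sn s j from rfl] at this
          rw [this] at h1'
          cases h1'
    unfold invert
    rw [fold_aux k n hn s hsort hP3 hdvd hP4 hP5 (s.length - 1) 1 _ (le_refl 1)
      (by omega) hinit]
    apply List.ext_getElem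
    · simp [mdl_length]
    intro j h1 h2
    have hjN : j < s.length := by simpa [mdl_length] using h1
    have hmg : (mdl s s.length)[j]'h1 = if cnd s s.length j then some (fs s j) else none := by
      simp [mdl]
    rw [hmg, if_pos (show cnd s s.length j from Or.inl hjN)]
    rw [List.getElem_map]
    congr 1
    rw [fs, List.getD_eq_getElem _ _ hjN]

end SweepAux

namespace SweepAux
open List

lemma length_count_bool (p : List Bool) : p.length = p.count true + p.count false := by
  induction p with
  | nil => simp
  | cons a t ih =>
    rw [List.length_cons, ih]
    cases a <;> simp [List.count_cons] <;> omega

lemma level_succ (k n : ℕ) (p : List Bool) (i : ℕ) (hi : i < p.length) :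
    level k n (p.take (i + 1)) =
      level k n (p.take i) + (if p.getD i true = true then (k * n : ℤ) else -(n : ℤ)) := by
  rw [List.take_succ, List.getElem?_eq_getElem hi, List.getD_eq_getElem _ _ hi]
  unfold level
  rw [Option.toList_some, List.count_append, List.count_append]
  cases hpi : p[i] <;> simp [hpi] <;> push_cast <;> ring

lemma level_dvd (k n : ℕ) (p : List Bool) (i : ℕ) :
    (n : ℤ) ∣ level k n (p.take i) := by
  refine ⟨(k : ℤ) * (p.take i).count true - (p.take i).count false, ?_⟩
  unfold level
  push_cast
  ring

lemma crossing (k n : ℕ) (hn : 0 < n) (p : List Bool) (v : ℤ) (hv : (n : ℤ) ∣ v) :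
    ∀ (m a : ℕ), a + m ≤ p.length → v ≤ level k n (p.take a) →
      level k n (p.take (a + m)) < v →
      ∃ c, a ≤ c ∧ c ≤ a + m ∧ level k n (p.take c) = v
  | 0, a, h1, h2, h3 => absurd h2 (by simp only [Nat.add_zero] at h3; omega)
  | m + 1, a, h1, h2, h3 => by
    by_cases hnext : v ≤ level k n (p.take (a + 1))
    · obtain ⟨c, hc1, hc2, hc3⟩ := crossing k n hn p v hv m (a + 1) (by omega) hnext
        (by rw [show a + 1 + m = a + (m + 1) by omega]; exact h3)
      exact ⟨c, by omega, by omega, hc3⟩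
    · push_neg at hnext
      have hs := level_succ k n p a (by omega)
      by_cases hpa : p.getD a true = true
      · rw [if_pos hpa] at hs
        have hkn : (0 : ℤ) ≤ (k * n : ℤ) := by positivity
        omega
      · rw [if_neg hpa] at hs
        have hd : (n : ℤ) ∣ level k n (p.take a) - v := dvd_sub (level_dvd k n p a) hv
        have heq : level k n (p.take a) = v := by
          obtain ⟨c, hc⟩ := hd
          have hn' : (0 : ℤ) < n := by exact_mod_cast hn
          have h2' : (n : ℤ) * c < n := by linarith
          have h3' : 0 ≤ (n : ℤ) * c := by linarith
          have hc0 : c = 0 := by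
            by_contra hc0
            rcases lt_or_gt_of_ne hc0 with h | h
            · nlinarith
            · nlinarith
          rw [hc0, mul_zero] at hc
          linarith
        exact ⟨a, le_refl a, by omega, heq⟩

end SweepAux

open SweepAux in
/-- Theorem 2.2: the inversion algorithm, applied to the S/W word `σ` output by the
sweep map on a `(kn,n)`-Dyck path, recovers the true sorted level sequence `τ`. -/
theorem stmt9 (k n : ℕ) (hn : 0 < n) (p : List Bool) (hp : IsDyck k n p) :
    (invert k n (sweepWord k n p)).toList =
      (sweep k n p).map (fun a => some a.1) := by
  obtain ⟨hc1, hc2, hnn⟩ := hp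
  set N := p.length with hN
  set g : ℕ → ℤ × Bool := fun i => (level k n (p.take i), p.getD i true) with hg
  set input : List (ℤ × Bool) := ((List.range N).reverse.map g) with hinputdef
  set s : List (ℤ × Bool) := sweep k n p with hsdef
  have hms : s = input.mergeSort (fun a b => decide (a.1 ≤ b.1)) := by
    rw [hsdef, hinputdef, hg, hN]
    rfl
  have htrans : ∀ (a b c : ℤ × Bool), decide (a.1 ≤ b.1) = true →
      decide (b.1 ≤ c.1) = true → decide (a.1 ≤ c.1) = true := by
    intro a b c h1 h2
    simp only [decide_eq_true_eq] at *
    exact le_trans h1 h2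
  have htotal : ∀ (a b : ℤ × Bool), (decide (a.1 ≤ b.1) || decide (b.1 ≤ a.1)) = true := by
    intro a b
    simp [le_total]
  have hperm : s.Perm input := by rw [hms]; exact List.mergeSort_perm input _
  have hslen : s.length = N := by rw [hperm.length_eq, hinputdef]; simp
  have hn' : (0 : ℤ) < n := by exact_mod_cast hn
  have hkn0 : (0 : ℤ) ≤ (k : ℤ) * n := by positivity
  have hLN : level k n (p.take N) = 0 := by
    rw [hN, List.take_length]
    unfold level
    rw [hc1, hc2]
    push_cast
    ring
  have hL0 : level k n (p.take 0) = 0 := by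
    simp [level]
  have hmem : ∀ a : ℤ × Bool, a ∈ s ↔ ∃ i, i < N ∧ g i = a := by
    intro a
    rw [hperm.mem_iff, hinputdef, List.mem_map]
    constructor
    · rintro ⟨i, hi, rfl⟩
      exact ⟨i, by simpa using hi, rfl⟩
    · rintro ⟨i, hi, rfl⟩
      exact ⟨i, by simpa using hi, rfl⟩
  have hpw : s.Pairwise (fun a b => a.1 ≤ b.1) := by
    have h := List.pairwise_mergeSort htrans htotal input
    rw [← hms] at h
    exact h.imp (by intro a b hab; simpa using hab)
  have hfs_eq : ∀ (j : ℕ) (hj : j < s.length), fs s j = (s[j]'hj).1 := by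
    intro j hj; rw [fs, List.getD_eq_getElem _ _ hj]
  have hsn_eq : ∀ (j : ℕ) (hj : j < s.length), sn s j = (s[j]'hj).2 := by
    intro j hj; rw [sn, List.getD_eq_getElem _ _ hj]
  have hsort : ∀ a b : ℕ, a ≤ b → b < s.length → fs s a ≤ fs s b := by
    intro a b hab hb
    rcases Nat.lt_or_ge a b with h | h
    · rw [hfs_eq a (by omega), hfs_eq b hb]
      exact List.pairwise_iff_getElem.1 hpw a b (by omega) hb h
    · have : a = b := by omega
      subst this
      exact le_refl _
  have hoccurs : ∀ v : ℤ, (∃ a ∈ s, a.1 = v) ↔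
      ∃ i, i < N ∧ level k n (p.take i) = v := by
    intro v
    constructor
    · rintro ⟨a, ha, rfl⟩
      obtain ⟨i, hi, rfl⟩ := (hmem a).1 ha
      exact ⟨i, hi, rfl⟩
    · rintro ⟨i, hi, hv⟩
      exact ⟨g i, (hmem _).2 ⟨i, hi, rfl⟩, hv⟩
  have hnonneg_mem : ∀ a : ℤ × Bool, a ∈ s → 0 ≤ a.1 := by
    intro a ha
    obtain ⟨i, hi, rfl⟩ := (hmem a).1 ha
    exact hnn i (by omega)
  have hdvd : ∀ a ∈ s, (n : ℤ) ∣ a.1 := by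
    intro a ha
    obtain ⟨i, hi, rfl⟩ := (hmem a).1 ha
    exact level_dvd k n p i
  have hN1 : 0 < N := by
    have h := length_count_bool p
    rw [hc1, hc2, ← hN] at h
    omega
  have h0 : 0 < s.length → fs s 0 = 0 := by
    intro h
    obtain ⟨a, ha, hav⟩ := (hoccurs 0).2 ⟨0, hN1, hL0⟩
    obtain ⟨j, hj, rfl⟩ := List.getElem_of_mem ha
    have h1 : fs s 0 ≤ fs s j := hsort 0 j (by omega) hj
    have h2 : 0 ≤ fs s 0 := by
      rw [hfs_eq 0 h]
      exact hnonneg_mem _ (List.getElem_mem h)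
    rw [hfs_eq j hj] at h1
    omega
  have hW0 : ∀ a ∈ s, a.1 = 0 → a.2 = true := by
    intro a ha h1
    obtain ⟨i, hi, rfl⟩ := (hmem a).1 ha
    by_contra h2
    have h2' : p.getD i true = false := by
      have hh : (g i).2 = p.getD i true := by rw [hg]
      rw [hh] at h2
      cases hpp : p.getD i true
      · rfl
      · exact absurd hpp h2
    have hv : level k n (p.take i) = 0 := h1
    have hstep := level_succ k n p i hi
    rw [if_neg (by rw [h2']; simp), hv] at hstep
    have := hnn (i + 1) (by omega)
    rw [hstep] at this
    omega
  have hP3 : ∀ v ℓ : ℤ, (∃ a ∈ s, a.1 = v) → (∃ a ∈ s, a.1 = ℓ) → v < ℓ →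
      ∃ a ∈ s, a.1 = v + n := by
    intro v ℓ hv hℓ hlt
    obtain ⟨i, hi, hLi⟩ := (hoccurs v).1 hv
    obtain ⟨j, hj, hLj⟩ := (hoccurs ℓ).1 hℓ
    have hv0 : 0 ≤ v := by rw [← hLi]; exact hnn i (by omega)
    have hdl : (n : ℤ) ∣ ℓ - v := by
      rw [← hLi, ← hLj]
      exact dvd_sub (level_dvd k n p j) (level_dvd k n p i)
    have hvn : v + n ≤ ℓ := by
      have := Int.le_of_dvd (by omega) hdl
      omega
    have hdvn : (n : ℤ) ∣ v + n := by
      have hh : (n : ℤ) ∣ v := by rw [← hLi]; exact level_dvd k n p i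
      exact dvd_add hh dvd_rfl
    obtain ⟨c, hcc1, hcc2, hcc3⟩ := crossing k n hn p (v + n) hdvn (N - j) j (by omega)
      (by rw [hLj]; omega)
      (by rw [show j + (N - j) = N by omega, hLN]; omega)
    have hcN : c < N := by
      by_contra hge
      have hcn : c = N := by omega
      rw [hcn, hLN] at hcc3
      omega
    exact (hoccurs (v + n)).2 ⟨c, hcN, hcc3⟩
  have hcountP : ∀ q : ℤ × Bool → Bool,
      s.countP q = (List.range N).countP (fun i => q (g i)) := by
    intro q
    rw [hperm.countP_eq, hinputdef, List.countP_map,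
      (List.reverse_perm (List.range N)).countP_eq]
    rfl
  have hP4 : ∀ t : ℤ, s.countP (fun a => a.1 = t) =
      s.countP (fun a => a = (t - k * n, true)) +
        s.countP (fun a => a = (t + n, false)) := by
    intro t
    rw [hcountP, hcountP, hcountP]
    have hA : (List.range N).countP (fun i => decide ((g i).1 = t)) =
        (List.range N).countP (fun i => decide (level k n (p.take (i + 1)) = t)) := by
      have e1 : (List.range (N + 1)).countP
          (fun i => decide (level k n (p.take i) = t)) =
          (List.range N).countP (fun i => decide (level k n (p.take i) = t)) +
            (if level k n (p.take N) = t then 1 else 0) := by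
        rw [List.range_succ, List.countP_append]
        simp [List.countP_cons]
      have e2 : (List.range (N + 1)).countP
          (fun i => decide (level k n (p.take i) = t)) =
          (if level k n (p.take 0) = t then 1 else 0) +
            (List.range N).countP (fun i => decide (level k n (p.take (i + 1)) = t)) := by
        rw [List.range_succ_eq_map, List.countP_cons, List.countP_map,
          show ((fun i => decide (level k n (p.take i) = t)) ∘ Nat.succ) =
            (fun i => decide (level k n (p.take (i + 1)) = t)) from rfl]
        simp [add_comm]
        by_cases hl : level k n [] = t <;> simp [hl]
      have e3 : (List.range N).countP (fun i => decide ((g i).1 = t)) =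
          (List.range N).countP (fun i => decide (level k n (p.take i) = t)) := rfl
      rw [e3]
      rw [hLN] at e1
      rw [hL0] at e2
      omega
    have hB : (List.range N).countP (fun i => decide (level k n (p.take (i + 1)) = t)) =
        (List.range N).countP (fun i => decide (g i = (t - ↑k * ↑n, true))) +
          (List.range N).countP (fun i => decide (g i = (t + ↑n, false))) := by
      apply countP_split
      intro i hi
      have hiN : i < N := List.mem_range.1 hi
      have hstep := level_succ k n p i hiN
      have hgi1 : (g i).1 = level k n (p.take i) := by rw [hg]
      have hgi2 : (g i).2 = p.getD i true := by rw [hg]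
      simp only [decide_eq_true_eq, Prod.ext_iff, hgi1, hgi2]
      cases hpi : p.getD i true
      · rw [if_neg (by rw [hpi]; simp)] at hstep
        rw [hstep]
        constructor
        · constructor
          · intro h
            right
            exact ⟨by linarith, rfl⟩
          · rintro (⟨ha1, ha2⟩ | ⟨ha1, ha2⟩)
            · cases ha2
            · linarith
        · rintro ⟨⟨ha1, ha2⟩, _⟩
          cases ha2
      · rw [if_pos hpi] at hstep
        rw [hstep]
        constructor
        · constructor
          · intro h
            left
            exact ⟨by linarith, rfl⟩
          · rintro (⟨ha1, ha2⟩ | ⟨ha1, ha2⟩)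
            · linarith
            · cases ha2
        · rintro ⟨_, ⟨hb1, hb2⟩⟩
          cases hb2
    rw [← hA] at hB
    exact hB
  have hP5 : ∀ m : ℕ, m + 1 < s.length → fs s (m + 1) ≠ fs s m → sn s (m + 1) = false := by
    intro m hm1 hne
    have hlt : fs s m < fs s (m + 1) :=
      lt_of_le_of_ne (hsort m (m + 1) (by omega) hm1) (Ne.symm hne)
    have hpos : 0 < fs s (m + 1) := by
      have h00 : fs s 0 = 0 := h0 (by omega)
      have := hsort 0 m (by omega) (by omega)
      omega
    set ℓ := fs s (m + 1) with hℓ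
    set q : ℤ × Bool → Bool := fun a => decide (a.1 = ℓ) with hq
    have hcpw : (input.filter q).Pairwise (fun a b => decide (a.1 ≤ b.1) = true) := by
      rw [List.pairwise_iff_getElem]
      intro a b ha hb hab
      have hma := List.mem_filter.1 (List.getElem_mem ha)
      have hmb := List.mem_filter.1 (List.getElem_mem hb)
      have h1 : ((input.filter q)[a]).1 = ℓ := by
        have hx := hma.2
        simp only [hq, decide_eq_true_eq] at hx
        exact hx
      have h2 : ((input.filter q)[b]).1 = ℓ := by
        have hx := hmb.2
        simp only [hq, decide_eq_true_eq] at hx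
        exact hx
      simp [h1, h2]
    have hsub : (input.filter q).Sublist s := by
      rw [hms]
      exact List.sublist_mergeSort htrans htotal hcpw (List.filter_sublist (l := input))
    have hsub2 : (input.filter q).Sublist (s.filter q) := by
      have h1 := hsub.filter q
      rwa [List.filter_filter, List.filter_congr (l := input)
        (fun a _ => Bool.and_self (q a) : ∀ a ∈ input, (fun a => q a && q a) a = q a)] at h1
    have hceq : input.filter q = s.filter q := by
      apply hsub2.eq_of_length
      rw [← List.countP_eq_length_filter, ← List.countP_eq_length_filter]
      exact (hperm.countP_eq q).symm
    have hfsm1 : (s[m + 1]'hm1).1 = ℓ := by rw [hℓ, hfs_eq (m + 1) hm1]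
    have hsf : s.filter q = (s[m + 1]'hm1) :: (s.drop (m + 2)).filter q := by
      conv_lhs => rw [← List.take_append_drop (m + 1) s]
      rw [List.filter_append]
      have h1 : (s.take (m + 1)).filter q = [] := by
        rw [List.filter_eq_nil_iff]
        intro a ha
        obtain ⟨j, hj, rfl⟩ := List.getElem_of_mem ha
        have hjlen : j < m + 1 := by
          have := hj
          simp only [List.length_take] at this
          omega
        rw [List.getElem_take]
        have hv : (s[j]'(by omega)).1 ≤ fs s m := by
          rw [← hfs_eq j (by omega)]
          exact hsort j m (by omega) (by omega)
        rw [hq]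
        simp only [decide_eq_true_eq]
        omega
      rw [h1, List.nil_append,
        List.drop_eq_getElem_cons (show m + 1 < s.length from hm1), List.filter_cons,
        if_pos (by rw [hq]; simp [hfsm1])]
    have hifq : input.filter q = ((List.range N).filter (fun i => q (g i))).reverse.map g := by
      rw [hinputdef, List.filter_map, List.filter_reverse]
      rfl
    set fr : List ℕ := (List.range N).filter (fun i => q (g i)) with hfr
    have hfrne : fr ≠ [] := by
      intro h
      have h2 : s.filter q = [] := by
        rw [← hceq, hifq, h]
        simp
      rw [hsf] at h2
      cases h2
    have hfrpw : fr.Pairwise (· < ·) :=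
      List.Pairwise.sublist (List.filter_sublist) (List.pairwise_lt_range (n := N))
    have hm0mem : fr.getLast hfrne ∈ fr := List.getLast_mem hfrne
    have hm0N : fr.getLast hfrne < N := by
      have := (List.mem_filter.1 hm0mem).1
      simpa using this
    have hm0L : level k n (p.take (fr.getLast hfrne)) = ℓ := by
      have h2 := (List.mem_filter.1 hm0mem).2
      rw [hq] at h2
      simpa using h2
    have hm0max : ∀ j ∈ fr, j ≤ fr.getLast hfrne :=
      le_getLast_of_pairwise_lt fr hfrne hfrpw
    have hrevne : fr.reverse ≠ [] := by simpa using hfrne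
    have hheadeq : g (fr.getLast hfrne) = s[m + 1]'hm1 := by
      have h1 : input.filter q = g (fr.reverse.head hrevne) :: fr.reverse.tail.map g := by
        rw [hifq]
        conv_lhs => rw [← List.cons_head_tail hrevne]
        rw [List.map_cons]
      rw [List.head_reverse] at h1
      rw [hceq, hsf] at h1
      exact (List.cons.inj h1).1.symm
    by_contra hcon
    have hsn : sn s (m + 1) = true := by
      cases hx : sn s (m + 1)
      · exact absurd hx hcon
      · rfl
    have hpm0 : p.getD (fr.getLast hfrne) true = true := by
      have he : (g (fr.getLast hfrne)).2 = (s[m + 1]'hm1).2 := by rw [hheadeq]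
      rw [hsn_eq (m + 1) hm1] at hsn
      rw [← he] at hsn
      rw [hg] at hsn
      exact hsn
    have hstep := level_succ k n p (fr.getLast hfrne) hm0N
    rw [if_pos hpm0, hm0L] at hstep
    have hdl : (n : ℤ) ∣ ℓ := by rw [← hm0L]; exact level_dvd k n p _
    obtain ⟨c, hcc1, hcc2, hcc3⟩ := crossing k n hn p ℓ hdl
      (N - (fr.getLast hfrne + 1)) (fr.getLast hfrne + 1) (by omega)
      (by rw [hstep]; omega)
      (by rw [show fr.getLast hfrne + 1 + (N - (fr.getLast hfrne + 1)) = N by omega, hLN]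
          omega)
    have hcN : c < N := by
      by_contra hge
      have hcn : c = N := by omega
      rw [hcn, hLN] at hcc3
      omega
    have hcfr : c ∈ fr := by
      rw [hfr, List.mem_filter]
      refine ⟨List.mem_range.2 hcN, ?_⟩
      rw [hq]
      simp only [decide_eq_true_eq]
      exact hcc3
    have := hm0max c hcfr
    omega
  have hmain := invert_eq k n hn s hsort hP3 hdvd hP4 hP5 h0 hW0
  have hsw : sweepWord k n p = s.map Prod.snd := by rw [hsdef]; rfl
  rw [hsw]
  exact hmain
end
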